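/- For any process P, renaming relation ℜ ⊆ A × A and X ⊆ A, θ_X(ℜ(P)) is strongly bisimilar to θ_X(ℜ(θ_{ℜ⁻¹(X)}(P))), where ℜ⁻¹(X) = {a | ∃b∈X. (a,b)∈ℜ}. -/

import Mathlib

/-- Actions of an LTS with time-outs. -/
inductive Act (A : Type*) where
  | vis (a : A)
  | tau
  | to

variable {A : Type*} {Proc : Type*}

/-- `Idle Tr P X` expresses `I(P) ∩ (X ∪ {τ}) = ∅`. -/
def Idle (Tr : Proc → Act A → Proc → Prop) (P : Proc) (X : Set A) : Prop :=
  (∀ a ∈ X, ∀ P', ¬ Tr P (Act.vis a) P') ∧ (∀ P', ¬ Tr P Act.tau P')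

/-- The state space is closed under environment operators `θ_X`, whose
transitions are exactly those generated by the three operational rules. -/
def ThetaSpec (Tr : Proc → Act A → Proc → Prop) (theta : Set A → Proc → Proc) : Prop :=
  ∀ (X : Set A) (P : Proc) (α : Act A) (Q : Proc),
    Tr (theta X P) α Q ↔
      ((α = Act.tau ∧ ∃ P', Tr P Act.tau P' ∧ Q = theta X P') ∨
       (∃ a, α = Act.vis a ∧ a ∈ X ∧ Tr P α Q) ∨
       (α ≠ Act.tau ∧ Idle Tr P X ∧ Tr P α Q))

/-- A strong time-out bisimulation. -/
def IsSTB (Tr : Proc → Act A → Proc → Prop) (theta : Set A → Proc → Proc)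
    (B : Proc → Proc → Prop) : Prop :=
  (∀ P Q, B P Q → B Q P) ∧
  (∀ P Q (α : Act A) P', B P Q → α ≠ Act.to → Tr P α P' →
      ∃ Q', Tr Q α Q' ∧ B P' Q') ∧
  (∀ P Q (X : Set A) P', B P Q → Idle Tr P X → Tr P Act.to P' →
      ∃ Q', Tr Q Act.to Q' ∧ B (theta X P') (theta X Q'))

/-- Strong reactive bisimilarity, characterised as the largest strong
time-out bisimulation. -/
def RBisimT (Tr : Proc → Act A → Proc → Prop) (theta : Set A → Proc → Proc)
    (P Q : Proc) : Prop :=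
  ∃ B, IsSTB Tr theta B ∧ B P Q

/-- A strong bisimulation (treating `τ` and `t` like any other action). -/
def IsSB (Tr : Proc → Act A → Proc → Prop) (B : Proc → Proc → Prop) : Prop :=
  (∀ P Q, B P Q → B Q P) ∧
  (∀ P Q (α : Act A) P', B P Q → Tr P α P' → ∃ Q', Tr Q α Q' ∧ B P' Q')

/-- Strong bisimilarity. -/
def SBisim (Tr : Proc → Act A → Proc → Prop) (P Q : Proc) : Prop :=
  ∃ B, IsSB Tr B ∧ B P Q

/-- Transitions of the CCSP relational renaming operator `ℜ( _ )` are exactly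
those generated by its operational rule. -/
def RenSpec (Tr : Proc → Act A → Proc → Prop)
    (ren : Set (A × A) → Proc → Proc) : Prop :=
  ∀ (R : Set (A × A)) (P : Proc) (β : Act A) (Q : Proc),
    Tr (ren R P) β Q ↔
      ∃ α P', Tr P α P' ∧ Q = ren R P' ∧
        ((α = Act.tau ∧ β = Act.tau) ∨ (α = Act.to ∧ β = Act.to) ∨
         (∃ a b, α = Act.vis a ∧ β = Act.vis b ∧ (a, b) ∈ R))

lemma idle_ren_iff (Tr : Proc → Act A → Proc → Prop)
    (ren : Set (A × A) → Proc → Proc) (hren : RenSpec Tr ren)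
    (R : Set (A × A)) (X : Set A) (p : Proc) :
    Idle Tr (ren R p) X ↔ Idle Tr p {a | ∃ b ∈ X, (a, b) ∈ R} := by
  constructor
  · rintro ⟨h1, h2⟩
    constructor
    · rintro a ⟨b, hb, hab⟩ p' hp'
      exact h1 b hb (ren R p') ((hren R p (Act.vis b) (ren R p')).2
        ⟨Act.vis a, p', hp', rfl, Or.inr (Or.inr ⟨a, b, rfl, rfl, hab⟩)⟩)
    · intro p' hp'
      exact h2 (ren R p') ((hren R p Act.tau (ren R p')).2
        ⟨Act.tau, p', hp', rfl, Or.inl ⟨rfl, rfl⟩⟩)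
  · rintro ⟨h1, h2⟩
    constructor
    · rintro a ha q hq
      obtain ⟨α, p', hp', -, hd⟩ := (hren R p (Act.vis a) q).1 hq
      rcases hd with ⟨-, h⟩ | ⟨-, h⟩ | ⟨a', b', rfl, hb, hab⟩
      · exact nomatch h
      · exact nomatch h
      · cases hb; exact h1 a' ⟨a, ha, hab⟩ p' hp'
    · intro q hq
      obtain ⟨α, p', hp', -, hd⟩ := (hren R p Act.tau q).1 hq
      rcases hd with ⟨rfl, -⟩ | ⟨-, h⟩ | ⟨a', b', -, hb, -⟩
      · exact h2 p' hp'
      · exact nomatch h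
      · exact nomatch hb

lemma theta_idle_iff (Tr : Proc → Act A → Proc → Prop)
    (theta : Set A → Proc → Proc) (hθ : ThetaSpec Tr theta)
    (Y : Set A) (p : Proc) (hI : Idle Tr p Y) (α : Act A) (q : Proc) :
    Tr (theta Y p) α q ↔ (α ≠ Act.tau ∧ Tr p α q) := by
  rw [hθ]
  constructor
  · rintro (⟨rfl, p', hp', -⟩ | ⟨a, rfl, ha, h⟩ | ⟨hne, -, h⟩)
    · exact absurd hp' (hI.2 p')
    · exact absurd h (hI.1 a ha q)
    · exact ⟨hne, h⟩
  · rintro ⟨hne, h⟩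
    exact Or.inr (Or.inr ⟨hne, hI, h⟩)

lemma idle_big (Tr : Proc → Act A → Proc → Prop)
    (theta : Set A → Proc → Proc) (ren : Set (A × A) → Proc → Proc)
    (hθ : ThetaSpec Tr theta) (hren : RenSpec Tr ren)
    (R : Set (A × A)) (X : Set A) (p : Proc)
    (hI : Idle Tr p {a | ∃ b ∈ X, (a, b) ∈ R}) :
    Idle Tr (ren R (theta {a | ∃ b ∈ X, (a, b) ∈ R} p)) X := by
  set Y := {a | ∃ b ∈ X, (a, b) ∈ R}
  constructor
  · rintro a ha q hq
    obtain ⟨α, p', hp', -, hd⟩ := (hren R _ (Act.vis a) q).1 hq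
    rcases hd with ⟨-, h⟩ | ⟨-, h⟩ | ⟨a', b', rfl, hb, hab⟩
    · exact nomatch h
    · exact nomatch h
    · cases hb
      have := (theta_idle_iff Tr theta hθ Y p hI _ _).1 hp'
      exact hI.1 a' ⟨a, ha, hab⟩ p' this.2
  · intro q hq
    obtain ⟨α, p', hp', -, hd⟩ := (hren R _ Act.tau q).1 hq
    rcases hd with ⟨rfl, -⟩ | ⟨-, h⟩ | ⟨a', b', -, hb, -⟩
    · exact absurd rfl ((theta_idle_iff Tr theta hθ Y p hI _ _).1 hp').1
    · exact nomatch h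
    · exact nomatch hb

lemma idle_back (Tr : Proc → Act A → Proc → Prop)
    (theta : Set A → Proc → Proc) (ren : Set (A × A) → Proc → Proc)
    (hθ : ThetaSpec Tr theta) (hren : RenSpec Tr ren)
    (R : Set (A × A)) (X : Set A) (p : Proc)
    (hI : Idle Tr (ren R (theta {a | ∃ b ∈ X, (a, b) ∈ R} p)) X) :
    Idle Tr p {a | ∃ b ∈ X, (a, b) ∈ R} := by
  set Y := {a | ∃ b ∈ X, (a, b) ∈ R} with hYdef
  constructor
  · rintro a ⟨b, hb, hab⟩ p' hp'
    have h1 : Tr (theta Y p) (Act.vis a) p' :=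
      (hθ Y p _ p').2 (Or.inr (Or.inl ⟨a, rfl, ⟨b, hb, hab⟩, hp'⟩))
    have h2 : Tr (ren R (theta Y p)) (Act.vis b) (ren R p') :=
      (hren R _ _ _).2 ⟨Act.vis a, p', h1, rfl, Or.inr (Or.inr ⟨a, b, rfl, rfl, hab⟩)⟩
    exact hI.1 b hb _ h2
  · intro p' hp'
    have h1 : Tr (theta Y p) Act.tau (theta Y p') :=
      (hθ Y p _ _).2 (Or.inl ⟨rfl, p', hp', rfl⟩)
    have h2 : Tr (ren R (theta Y p)) Act.tau (ren R (theta Y p')) :=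
      (hren R _ _ _).2 ⟨Act.tau, _, h1, rfl, Or.inl ⟨rfl, rfl⟩⟩
    exact hI.2 _ h2

lemma key1 (Tr : Proc → Act A → Proc → Prop)
    (theta : Set A → Proc → Proc) (ren : Set (A × A) → Proc → Proc)
    (hθ : ThetaSpec Tr theta) (hren : RenSpec Tr ren)
    (R : Set (A × A)) (X : Set A) (p : Proc) (α : Act A) (q : Proc)
    (h : Tr (theta X (ren R p)) α q) :
    ∃ q', Tr (theta X (ren R (theta {a | ∃ b ∈ X, (a, b) ∈ R} p))) α q' ∧
      ((∃ p', q = theta X (ren R p') ∧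
        q' = theta X (ren R (theta {a | ∃ b ∈ X, (a, b) ∈ R} p'))) ∨ q = q') := by
  set Y := {a | ∃ b ∈ X, (a, b) ∈ R} with hYdef
  rcases (hθ X (ren R p) α q).1 h with
    ⟨rfl, q0, hq0, rfl⟩ | ⟨a, rfl, ha, h2⟩ | ⟨hne, hIdle, h2⟩
  · obtain ⟨α0, p', hp', rfl, hd⟩ := (hren R p Act.tau q0).1 hq0
    have hα0 : α0 = Act.tau := by
      rcases hd with ⟨rfl, -⟩ | ⟨-, h⟩ | ⟨a', b', -, hb, -⟩
      · rfl
      · exact nomatch h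
      · exact nomatch hb
    subst hα0
    have t1 : Tr (theta Y p) Act.tau (theta Y p') :=
      (hθ Y p _ _).2 (Or.inl ⟨rfl, p', hp', rfl⟩)
    have t2 : Tr (ren R (theta Y p)) Act.tau (ren R (theta Y p')) :=
      (hren R _ _ _).2 ⟨Act.tau, _, t1, rfl, Or.inl ⟨rfl, rfl⟩⟩
    exact ⟨theta X (ren R (theta Y p')),
      (hθ X _ _ _).2 (Or.inl ⟨rfl, _, t2, rfl⟩), Or.inl ⟨p', rfl, rfl⟩⟩
  · obtain ⟨α0, p', hp', rfl, hd⟩ := (hren R p (Act.vis a) q).1 h2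
    rcases hd with ⟨-, hc⟩ | ⟨-, hc⟩ | ⟨b, a', rfl, hc, hab⟩
    · exact nomatch hc
    · exact nomatch hc
    · cases hc
      have t1 : Tr (theta Y p) (Act.vis b) p' :=
        (hθ Y p _ p').2 (Or.inr (Or.inl ⟨b, rfl, ⟨a, ha, hab⟩, hp'⟩))
      have t2 : Tr (ren R (theta Y p)) (Act.vis a) (ren R p') :=
        (hren R _ _ _).2 ⟨Act.vis b, p', t1, rfl, Or.inr (Or.inr ⟨b, a, rfl, rfl, hab⟩)⟩
      exact ⟨ren R p',
        (hθ X _ _ _).2 (Or.inr (Or.inl ⟨a, rfl, ha, t2⟩)), Or.inr rfl⟩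
  · have hpY : Idle Tr p Y := (idle_ren_iff Tr ren hren R X p).1 hIdle
    obtain ⟨α0, p', hp', rfl, hd⟩ := (hren R p α q).1 h2
    have hα0 : α0 ≠ Act.tau := by
      rcases hd with ⟨-, rfl⟩ | ⟨rfl, -⟩ | ⟨a', b', rfl, -, -⟩
      · exact absurd rfl hne
      · exact fun hc => nomatch hc
      · exact fun hc => nomatch hc
    have t1 : Tr (theta Y p) α0 p' :=
      (theta_idle_iff Tr theta hθ Y p hpY α0 p').2 ⟨hα0, hp'⟩
    have t2 : Tr (ren R (theta Y p)) α (ren R p') :=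
      (hren R _ _ _).2 ⟨α0, p', t1, rfl, hd⟩
    exact ⟨ren R p', (hθ X _ _ _).2 (Or.inr (Or.inr
      ⟨hne, idle_big Tr theta ren hθ hren R X p hpY, t2⟩)), Or.inr rfl⟩

lemma key2 (Tr : Proc → Act A → Proc → Prop)
    (theta : Set A → Proc → Proc) (ren : Set (A × A) → Proc → Proc)
    (hθ : ThetaSpec Tr theta) (hren : RenSpec Tr ren)
    (R : Set (A × A)) (X : Set A) (p : Proc) (α : Act A) (q : Proc)
    (h : Tr (theta X (ren R (theta {a | ∃ b ∈ X, (a, b) ∈ R} p))) α q) :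
    ∃ q', Tr (theta X (ren R p)) α q' ∧
      ((∃ p', q = theta X (ren R (theta {a | ∃ b ∈ X, (a, b) ∈ R} p')) ∧
        q' = theta X (ren R p')) ∨ q = q') := by
  set Y := {a | ∃ b ∈ X, (a, b) ∈ R} with hYdef
  rcases (hθ X (ren R (theta Y p)) α q).1 h with
    ⟨rfl, q0, hq0, rfl⟩ | ⟨a, rfl, ha, h2⟩ | ⟨hne, hIdle, h2⟩
  · obtain ⟨α0, p'', hp'', rfl, hd⟩ := (hren R _ Act.tau q0).1 hq0
    have hα0 : α0 = Act.tau := by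
      rcases hd with ⟨rfl, -⟩ | ⟨-, h⟩ | ⟨a', b', -, hb, -⟩
      · rfl
      · exact nomatch h
      · exact nomatch hb
    subst hα0
    rcases (hθ Y p Act.tau p'').1 hp'' with
      ⟨-, p', hp', rfl⟩ | ⟨a, ha, -⟩ | ⟨hne, -, -⟩
    · have t2 : Tr (ren R p) Act.tau (ren R p') :=
        (hren R _ _ _).2 ⟨Act.tau, _, hp', rfl, Or.inl ⟨rfl, rfl⟩⟩
      exact ⟨theta X (ren R p'),
        (hθ X _ _ _).2 (Or.inl ⟨rfl, _, t2, rfl⟩), Or.inl ⟨p', rfl, rfl⟩⟩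
    · exact nomatch ha
    · exact absurd rfl hne
  · obtain ⟨α0, p'', hp'', rfl, hd⟩ := (hren R _ (Act.vis a) q).1 h2
    rcases hd with ⟨-, hc⟩ | ⟨-, hc⟩ | ⟨b, a', rfl, hc, hab⟩
    · exact nomatch hc
    · exact nomatch hc
    · cases hc
      have hpb : Tr p (Act.vis b) p'' := by
        rcases (hθ Y p (Act.vis b) p'').1 hp'' with
          ⟨hc, -⟩ | ⟨a'', ha'', -, ht⟩ | ⟨-, -, ht⟩
        · exact nomatch hc
        · exact ht
        · exact ht
      have t2 : Tr (ren R p) (Act.vis a) (ren R p'') :=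
        (hren R _ _ _).2 ⟨Act.vis b, p'', hpb, rfl, Or.inr (Or.inr ⟨b, a, rfl, rfl, hab⟩)⟩
      exact ⟨ren R p'',
        (hθ X _ _ _).2 (Or.inr (Or.inl ⟨a, rfl, ha, t2⟩)), Or.inr rfl⟩
  · have hpY : Idle Tr p Y := idle_back Tr theta ren hθ hren R X p hIdle
    have hIdle' : Idle Tr (ren R p) X := (idle_ren_iff Tr ren hren R X p).2 hpY
    obtain ⟨α0, p'', hp'', rfl, hd⟩ := (hren R _ α q).1 h2
    have hp : Tr p α0 p'' := ((theta_idle_iff Tr theta hθ Y p hpY α0 p'').1 hp'').2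
    have t2 : Tr (ren R p) α (ren R p'') :=
      (hren R _ _ _).2 ⟨α0, p'', hp, rfl, hd⟩
    exact ⟨ren R p'', (hθ X _ _ _).2 (Or.inr (Or.inr ⟨hne, hIdle', t2⟩)), Or.inr rfl⟩


/-- `θ_X(ℜ(P)) ↔ θ_X(ℜ(θ_{ℜ⁻¹(X)}(P)))`, where `ℜ⁻¹(X) = {a | ∃b∈X. (a,b)∈ℜ}`. -/
theorem theta_ren (Tr : Proc → Act A → Proc → Prop)
    (theta : Set A → Proc → Proc) (ren : Set (A × A) → Proc → Proc)
    (hθ : ThetaSpec Tr theta) (hren : RenSpec Tr ren)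
    (P : Proc) (R : Set (A × A)) (X : Set A) :
    SBisim Tr (theta X (ren R P))
      (theta X (ren R (theta {a | ∃ b ∈ X, (a, b) ∈ R} P))) := by
  set Y := {a | ∃ b ∈ X, (a, b) ∈ R} with hYdef
  refine ⟨fun P Q =>
      (∃ p, P = theta X (ren R p) ∧ Q = theta X (ren R (theta Y p))) ∨
      (∃ p, Q = theta X (ren R p) ∧ P = theta X (ren R (theta Y p))) ∨ P = Q,
    ⟨?_, ?_⟩, Or.inl ⟨P, rfl, rfl⟩⟩
  · rintro P' Q' (⟨p, h1, h2⟩ | ⟨p, h1, h2⟩ | rfl)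
    · exact Or.inr (Or.inl ⟨p, h1, h2⟩)
    · exact Or.inl ⟨p, h1, h2⟩
    · exact Or.inr (Or.inr rfl)
  · rintro P' Q' α q (⟨p, rfl, rfl⟩ | ⟨p, rfl, rfl⟩ | rfl) hq
    · obtain ⟨q', hq', hrel⟩ := key1 Tr theta ren hθ hren R X p α q hq
      refine ⟨q', hq', ?_⟩
      rcases hrel with ⟨p', h1, h2⟩ | rfl
      · exact Or.inl ⟨p', h1, h2⟩
      · exact Or.inr (Or.inr rfl)
    · obtain ⟨q', hq', hrel⟩ := key2 Tr theta ren hθ hren R X p α q hq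
      refine ⟨q', hq', ?_⟩
      rcases hrel with ⟨p', h1, h2⟩ | rfl
      · exact Or.inr (Or.inl ⟨p', h2, h1⟩)
      · exact Or.inr (Or.inr rfl)
    · exact ⟨q, hq, Or.inr (Or.inr rfl)⟩
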